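/- Let L be an n×n real symmetric matrix, let b, J, V, V' be vectors in ℝⁿ, and let w be a real number. If L·V = J and (L − w·b·bᵀ)·V' = J, then ⟨V', J⟩ − ⟨V, J⟩ = w·(bᵀV)·(bᵀV'). (In circuit terms: the change in total I²R dissipation caused by removing a resistor link equals the product of the current flowing on the link before its removal, w·bᵀV, and the potential difference across its endpoints after its removal, bᵀV'.) -/
import Mathlib


open Matrix

/-- The change in total I²R dissipation caused by removing a resistor link equals
the product of the current on the link before removal, `w * (b ⬝ᵥ V)`, and the potential
difference across its endpoints after removal, `b ⬝ᵥ V'`. -/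
theorem dissipation_change_eq_current_mul_potential
    {n : ℕ} (L : Matrix (Fin n) (Fin n) ℝ) (hL : L.IsSymm)
    (b J V V' : Fin n → ℝ) (w : ℝ)
    (hV : L.mulVec V = J)
    (hV' : (L - w • vecMulVec b b).mulVec V' = J) :
    V' ⬝ᵥ J - V ⬝ᵥ J = w * (b ⬝ᵥ V) * (b ⬝ᵥ V') := by
  have h1 : V' ⬝ᵥ J = V' ⬝ᵥ L.mulVec V := by rw [hV]
  have h2 : V ⬝ᵥ J = V ⬝ᵥ L.mulVec V' - w * (b ⬝ᵥ V) * (b ⬝ᵥ V') := by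
    rw [← hV', sub_mulVec, smul_mulVec, dotProduct_sub, dotProduct_smul]
    have : V ⬝ᵥ (vecMulVec b b *ᵥ V') = (b ⬝ᵥ V) * (b ⬝ᵥ V') := by
      simp [mulVec, vecMulVec_apply, dotProduct, Finset.mul_sum, Finset.sum_mul]
      rw [Finset.sum_comm]
      congr 1; ext i; congr 1; ext j; ring
    rw [this, smul_eq_mul]; ring
  have h3 : V' ⬝ᵥ L.mulVec V = V ⬝ᵥ L.mulVec V' := by
    rw [dotProduct_mulVec, ← mulVec_transpose, hL.eq, dotProduct_comm]
  rw [h1, h2, h3]; ring
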